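/- There exist finite reactive LPTSes R1 and R2 with R1 ⋠ R2 such that no fully-probabilistic LPTS is a counterexample, i.e. every fully-probabilistic C with C ≼ R1 also satisfies C ≼ R2. -/

import Mathlib

open Classical

structure FDist (S : Type) [Fintype S] where
  pmf : S → ℝ
  nonneg : ∀ s, 0 ≤ pmf s
  sum_one : ∑ s, pmf s = 1

namespace FDist

variable {S S1 S2 : Type} [Fintype S] [Fintype S1] [Fintype S2]

noncomputable def prob (μ : FDist S) (T : Set S) : ℝ :=
  ∑ s, if s ∈ T then μ.pmf s else 0

def supp (μ : FDist S) : Set S := {s | 0 < μ.pmf s}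

noncomputable def dirac (s : S) : FDist S where
  pmf t := if t = s then 1 else 0
  nonneg t := by (try dsimp only); split <;> norm_num
  sum_one := by simp

noncomputable def prod (μ1 : FDist S1) (μ2 : FDist S2) : FDist (S1 × S2) where
  pmf p := μ1.pmf p.1 * μ2.pmf p.2
  nonneg p := mul_nonneg (μ1.nonneg _) (μ2.nonneg _)
  sum_one := by
    rw [Fintype.sum_prod_type]
    simp_rw [← Finset.mul_sum, μ2.sum_one, mul_one]
    exact μ1.sum_one

end FDist

/-- Image of a set under a relation: `R(T) = {s2 | ∃ s1 ∈ T, (s1,s2) ∈ R}`. -/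
def relImage {S1 S2 : Type} (R : Set (S1 × S2)) (T : Set S1) : Set S2 :=
  {s2 | ∃ s1 ∈ T, (s1, s2) ∈ R}

/-- The lifting `μ1 ⊑_R μ2` of a relation on states to distributions,
via the Hall-type subset condition. -/
def liftRel {S1 S2 : Type} [Fintype S1] [Fintype S2]
    (R : Set (S1 × S2)) (μ1 : FDist S1) (μ2 : FDist S2) : Prop :=
  ∀ T ⊆ μ1.supp, μ1.prob T ≤ μ2.prob (relImage R T)

/-- A (finite, finitely-branching) labeled probabilistic transition system. -/
structure LPTS (S : Type) (Act : Type) [Fintype S] where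
  start : S
  alpha : Set Act
  trans : S → Act → Set (FDist S)
  trans_mem : ∀ s a μ, μ ∈ trans s a → a ∈ alpha
  finite_trans : ∀ s a, (trans s a).Finite

/-- `R` is a strong simulation between `L1` and `L2`. -/
def StrongSim {S1 S2 Act : Type} [Fintype S1] [Fintype S2]
    (L1 : LPTS S1 Act) (L2 : LPTS S2 Act) (R : Set (S1 × S2)) : Prop :=
  ∀ s1 s2, (s1, s2) ∈ R → ∀ a μ1, μ1 ∈ L1.trans s1 a →
    ∃ μ2 ∈ L2.trans s2 a, liftRel R μ1 μ2

/-- `L2` strongly simulates `L1` (written `L1 ≼ L2`). -/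
def Sim {S1 S2 Act : Type} [Fintype S1] [Fintype S2]
    (L1 : LPTS S1 Act) (L2 : LPTS S2 Act) : Prop :=
  ∃ R, StrongSim L1 L2 R ∧ (L1.start, L2.start) ∈ R

/-- Reactive: at most one transition per state and action. -/
def Reactive {S Act : Type} [Fintype S] (L : LPTS S Act) : Prop :=
  ∀ s a, (L.trans s a).Subsingleton

/-- Fully probabilistic: at most one transition per state. -/
def FullyProbabilistic {S Act : Type} [Fintype S] (L : LPTS S Act) : Prop :=
  ∀ s, {p : Act × FDist S | p.2 ∈ L.trans s p.1}.Subsingleton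

section Aux

open FDist

variable {S : Type} [Fintype S]

lemma prob_nonneg (μ : FDist S) (T : Set S) : 0 ≤ μ.prob T := by
  apply Finset.sum_nonneg; intro s _
  by_cases h : s ∈ T <;> simp [h, μ.nonneg s]

lemma prob_mono (μ : FDist S) {T U : Set S} (h : T ⊆ U) : μ.prob T ≤ μ.prob U := by
  apply Finset.sum_le_sum; intro s _
  by_cases hs : s ∈ T
  · simp [hs, h hs]
  · by_cases hu : s ∈ U <;> simp [hs, hu, μ.nonneg s]

lemma prob_le_one (μ : FDist S) (T : Set S) : μ.prob T ≤ 1 := by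
  rw [← μ.sum_one]
  apply Finset.sum_le_sum; intro s _
  by_cases hs : s ∈ T <;> simp [hs, μ.nonneg s]

lemma prob_empty (μ : FDist S) : μ.prob (∅ : Set S) = 0 := by
  simp [FDist.prob]

lemma prob_singleton (μ : FDist S) (s : S) : μ.prob {s} = μ.pmf s := by
  classical
  simp [FDist.prob, Set.mem_singleton_iff]

lemma exists_pos_of_prob_pos {μ : FDist S} {T : Set S} (h : 0 < μ.prob T) :
    ∃ s ∈ T, 0 < μ.pmf s := by
  by_contra hc
  push_neg at hc
  have : μ.prob T ≤ 0 := by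
    apply Finset.sum_nonpos; intro s _
    by_cases hs : s ∈ T
    · simpa [hs] using hc s hs
    · simp [hs]
  linarith

lemma mem_supp_iff (μ : FDist S) (s : S) : s ∈ μ.supp ↔ 0 < μ.pmf s := Iff.rfl

lemma dirac_prob_of_mem {s : S} {T : Set S} (h : s ∈ T) : (dirac s).prob T = 1 := by
  apply le_antisymm (prob_le_one _ _)
  have h1 : (dirac s).prob {s} = 1 := by simp [prob_singleton, dirac]
  calc (1:ℝ) = (dirac s).prob {s} := h1.symm
    _ ≤ (dirac s).prob T := prob_mono _ (by simpa using h)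

lemma liftRel_to_dirac {S1 S2 : Type} [Fintype S1] [Fintype S2]
    (R : Set (S1 × S2)) (μ : FDist S1) (s : S2)
    (h : ∀ t ∈ μ.supp, (t, s) ∈ R) : liftRel R μ (dirac s) := by
  intro T hT
  rcases T.eq_empty_or_nonempty with rfl | ⟨t, ht⟩
  · have : relImage R (∅ : Set S1) = ∅ := by
      ext w; simp [relImage]
    rw [this, prob_empty, prob_empty]
  · have hs : s ∈ relImage R T := ⟨t, ht, h t (hT ht)⟩
    calc μ.prob T ≤ 1 := prob_le_one _ _
      _ = (dirac s).prob (relImage R T) := (dirac_prob_of_mem hs).symm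

noncomputable def μhalf : FDist (Fin 4) where
  pmf s := if s = 1 ∨ s = 2 then 1/2 else 0
  nonneg s := by (try dsimp only); split <;> norm_num
  sum_one := by rw [Fin.sum_univ_four]; simp; norm_num

noncomputable def νthird : FDist (Fin 5) where
  pmf s := if s = 1 ∨ s = 2 ∨ s = 3 then 1/3 else 0
  nonneg s := by (try dsimp only); split <;> norm_num
  sum_one := by rw [Fin.sum_univ_five]; simp; norm_num

noncomputable def sysR1 : LPTS (Fin 4) (Fin 3) where
  start := 0
  alpha := Set.univ
  trans s a :=
    if s = 0 ∧ a = 0 then {μhalf}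
    else if s = 1 ∧ (a = 1 ∨ a = 2) then {FDist.dirac 3}
    else ∅
  trans_mem := fun _ _ _ _ => Set.mem_univ _
  finite_trans s a := by
    (try dsimp only)
    split
    · exact Set.finite_singleton _
    split
    · exact Set.finite_singleton _
    · exact Set.finite_empty

noncomputable def sysR2 : LPTS (Fin 5) (Fin 3) where
  start := 0
  alpha := Set.univ
  trans s a :=
    if s = 0 ∧ a = 0 then {νthird}
    else if (s = 1 ∧ a = 1) ∨ (s = 2 ∧ (a = 1 ∨ a = 2)) ∨ (s = 3 ∧ a = 2) then {FDist.dirac 4}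
    else ∅
  trans_mem := fun _ _ _ _ => Set.mem_univ _
  finite_trans s a := by
    (try dsimp only)
    split
    · exact Set.finite_singleton _
    split
    · exact Set.finite_singleton _
    · exact Set.finite_empty

lemma R1_trans_char {s : Fin 4} {a : Fin 3} {μ : FDist (Fin 4)} (h : μ ∈ sysR1.trans s a) :
    (s = 0 ∧ a = 0 ∧ μ = μhalf) ∨ (s = 1 ∧ (a = 1 ∨ a = 2) ∧ μ = FDist.dirac 3) := by
  simp only [sysR1] at h
  split_ifs at h with h1 h2
  · exact Or.inl ⟨h1.1, h1.2, by simpa using h⟩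
  · exact Or.inr ⟨h2.1, h2.2, by simpa using h⟩
  · simp at h

lemma R2_trans_char {s : Fin 5} {a : Fin 3} {μ : FDist (Fin 5)} (h : μ ∈ sysR2.trans s a) :
    (s = 0 ∧ a = 0 ∧ μ = νthird) ∨
    (((s = 1 ∧ a = 1) ∨ (s = 2 ∧ (a = 1 ∨ a = 2)) ∨ (s = 3 ∧ a = 2)) ∧ μ = FDist.dirac 4) := by
  simp only [sysR2] at h
  split_ifs at h with h1 h2
  · exact Or.inl ⟨h1.1, h1.2, by simpa using h⟩
  · exact Or.inr ⟨h2, by simpa using h⟩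
  · simp at h

end Aux

section Main
open FDist

lemma μhalf_pmf_char {r : Fin 4} (h : 0 < μhalf.pmf r) : r = 1 ∨ r = 2 := by
  by_contra hc
  push_neg at hc
  simp [μhalf, hc.1, hc.2] at h

lemma μhalf_prob_le {U : Set (Fin 4)} (h : (2:Fin 4) ∉ U) : μhalf.prob U ≤ 1/2 := by
  classical
  unfold FDist.prob
  rw [Fin.sum_univ_four]
  simp [μhalf, h]
  split_ifs <;> norm_num

lemma νthird_123 : νthird.prob {1,2,3} = 1 := by
  classical
  unfold FDist.prob
  rw [Fin.sum_univ_five]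
  simp [νthird]
  norm_num

lemma νthird_12 : νthird.prob {1,2} = 2/3 := by
  classical
  unfold FDist.prob
  rw [Fin.sum_univ_five]
  simp [νthird]
  norm_num

lemma νthird_23 : νthird.prob {2,3} = 2/3 := by
  classical
  unfold FDist.prob
  rw [Fin.sum_univ_five]
  simp [νthird]
  norm_num

lemma reactive1 : Reactive sysR1 := by
  intro s a
  simp only [sysR1]
  split_ifs
  · exact Set.subsingleton_singleton
  · exact Set.subsingleton_singleton
  · exact Set.subsingleton_empty

lemma reactive2 : Reactive sysR2 := by
  intro s a
  simp only [sysR2]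
  split_ifs
  · exact Set.subsingleton_singleton
  · exact Set.subsingleton_singleton
  · exact Set.subsingleton_empty

lemma notSim : ¬ Sim sysR1 sysR2 := by
  rintro ⟨R, hR, hstart⟩
  obtain ⟨μ2, hμ2, hlift⟩ := hR 0 0 hstart 0 μhalf (by simp [sysR1])
  have hμ2' : μ2 = νthird := by
    rcases R2_trans_char hμ2 with ⟨-, -, h⟩ | ⟨h, -⟩
    · exact h
    · exfalso; revert h; decide
  subst hμ2'
  have hsub : relImage R {1} ⊆ ({2} : Set (Fin 5)) := by
    rintro w ⟨t, ht, hRt⟩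
    rw [Set.mem_singleton_iff] at ht
    subst ht
    obtain ⟨ν, hν, -⟩ := hR 1 w hRt 1 (FDist.dirac 3) (by simp [sysR1])
    obtain ⟨ν', hν', -⟩ := hR 1 w hRt 2 (FDist.dirac 3) (by simp [sysR1])
    have hw1 : w = 1 ∨ w = 2 := by
      rcases R2_trans_char hν with ⟨-, ha, -⟩ | ⟨h, -⟩
      · exact absurd ha (by decide)
      · rcases h with ⟨h1, -⟩ | ⟨h2, -⟩ | ⟨-, h3⟩
        · exact Or.inl h1
        · exact Or.inr h2
        · exact absurd h3 (by decide)
    have hw2 : w = 2 ∨ w = 3 := by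
      rcases R2_trans_char hν' with ⟨-, ha, -⟩ | ⟨h, -⟩
      · exact absurd ha (by decide)
      · rcases h with ⟨-, h1⟩ | ⟨h2, -⟩ | ⟨h3, -⟩
        · exact absurd h1 (by decide)
        · exact Or.inl h2
        · exact Or.inr h3
    rcases hw1 with rfl | rfl
    · rcases hw2 with h | h <;> exact absurd h (by decide)
    · rfl
  have h1 : ({1} : Set (Fin 4)) ⊆ μhalf.supp := by
    intro t ht
    rw [Set.mem_singleton_iff] at ht
    subst ht
    show 0 < μhalf.pmf 1
    simp [μhalf]
  have hle := hlift {1} h1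
  rw [prob_singleton] at hle
  have hle2 : νthird.prob (relImage R {1}) ≤ νthird.prob {2} := prob_mono _ hsub
  rw [prob_singleton] at hle2
  have e1 : μhalf.pmf 1 = 1/2 := by simp [μhalf]
  have e2 : νthird.pmf 2 = 1/3 := by simp [νthird]
  rw [e1] at hle
  rw [e2] at hle2
  linarith

def DeadSt {T : Type} [Fintype T] (C : LPTS T (Fin 3)) (c : T) : Prop :=
  ∀ a μ, μ ∉ C.trans c a

def MatSt {T : Type} [Fintype T] (C : LPTS T (Fin 3)) (A : Set (Fin 3)) (c : T) : Prop :=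
  ∀ a μ, μ ∈ C.trans c a → a ∈ A ∧ ∀ c' ∈ μ.supp, DeadSt C c'

lemma forward (T : Type) [i : Fintype T] (C : LPTS T (Fin 3))
    (hFP : FullyProbabilistic C) : Sim C sysR1 → Sim C sysR2 := by
  rintro ⟨Q, hQ, hQ0⟩
  classical
  -- states Q-related to r12 = 2 or to the leaf 3 of R1 are dead
  have dead_of_Q2 : ∀ c', (c', (2:Fin 4)) ∈ Q → DeadSt C c' := by
    intro c' h a ν hν
    obtain ⟨μ2, hμ2, -⟩ := hQ c' 2 h a ν hν
    rcases R1_trans_char hμ2 with ⟨h3, -⟩ | ⟨h3, -⟩ <;> exact absurd h3 (by decide)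
  have dead_of_Q3 : ∀ c', (c', (3:Fin 4)) ∈ Q → DeadSt C c' := by
    intro c' h a ν hν
    obtain ⟨μ2, hμ2, -⟩ := hQ c' 3 h a ν hν
    rcases R1_trans_char hμ2 with ⟨h3, -⟩ | ⟨h3, -⟩ <;> exact absurd h3 (by decide)
  -- any state in the support of a distribution lifted to μhalf is related to 1 or 2
  have claimQ : ∀ (μ : FDist T), liftRel Q μ μhalf → ∀ c' ∈ μ.supp,
      ∃ r : Fin 4, (c', r) ∈ Q ∧ (r = 1 ∨ r = 2) := by
    intro μ hl c' hc'
    have hsing : ({c'} : Set T) ⊆ μ.supp := by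
      intro t ht; rw [Set.mem_singleton_iff] at ht; subst ht; exact hc'
    have hle := hl {c'} hsing
    rw [prob_singleton] at hle
    have hpos : 0 < μhalf.prob (relImage Q {c'}) := lt_of_lt_of_le hc' hle
    obtain ⟨r, hr, hrpos⟩ := exists_pos_of_prob_pos hpos
    obtain ⟨t, ht, hQt⟩ := hr
    rw [Set.mem_singleton_iff] at ht
    subst ht
    exact ⟨r, hQt, μhalf_pmf_char hrpos⟩
  -- every state in the support of μ (lifted to μhalf) matches only y/z to dead states
  have claimMat : ∀ (μ : FDist T), liftRel Q μ μhalf → ∀ c' ∈ μ.supp,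
      MatSt C {1,2} c' := by
    intro μ hl c' hc' b ν hν
    obtain ⟨r, hrQ, hr12⟩ := claimQ μ hl c' hc'
    have hr1 : r = 1 := by
      rcases hr12 with rfl | rfl
      · rfl
      · exact absurd hν (dead_of_Q2 c' hrQ b ν)
    subst hr1
    obtain ⟨μ2, hμ2, hlift2⟩ := hQ c' 1 hrQ b ν hν
    rcases R1_trans_char hμ2 with ⟨h, -⟩ | ⟨-, hb, hμ2e⟩
    · exact absurd h (by decide)
    subst hμ2e
    refine ⟨by rcases hb with rfl | rfl <;> simp, ?_⟩
    intro c'' hc''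
    have hsing : ({c''} : Set T) ⊆ ν.supp := by
      intro t ht; rw [Set.mem_singleton_iff] at ht; subst ht; exact hc''
    have hle := hlift2 {c''} hsing
    rw [prob_singleton] at hle
    have hpos : 0 < (FDist.dirac (3:Fin 4)).prob (relImage Q {c''}) :=
      lt_of_lt_of_le hc'' hle
    obtain ⟨r', hr', hrpos⟩ := exists_pos_of_prob_pos hpos
    obtain ⟨t, ht, hQt⟩ := hr'
    rw [Set.mem_singleton_iff] at ht
    subst ht
    have hr3 : r' = 3 := by
      by_contra hcon
      simp [FDist.dirac, hcon] at hrpos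
    subst hr3
    exact dead_of_Q3 _ hQt
  -- the simulation relation to R2
  set RR : Set (T × Fin 5) := {p : T × Fin 5 | (p.2 = 4 ∧ DeadSt C p.1) ∨ (p.2 = 1 ∧ MatSt C {1} p.1) ∨
      (p.2 = 2 ∧ MatSt C {1,2} p.1) ∨ (p.2 = 3 ∧ MatSt C {2} p.1) ∨
      (p.2 = 0 ∧ (p.1, (0:Fin 4)) ∈ Q)} with hRR
  have memRR : ∀ (c : T) (w : Fin 5), ((w = 4 ∧ DeadSt C c) ∨ (w = 1 ∧ MatSt C {1} c) ∨
      (w = 2 ∧ MatSt C {1,2} c) ∨ (w = 3 ∧ MatSt C {2} c) ∨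
      (w = 0 ∧ (c, (0:Fin 4)) ∈ Q)) → (c, w) ∈ RR := fun c w h => h
  refine ⟨RR, ?_, memRR _ _ (Or.inr (Or.inr (Or.inr (Or.inr ⟨rfl, hQ0⟩))))⟩
  intro c w hcw a μC hμC
  rcases hcw with ⟨hw, hdead⟩ | ⟨hw, hmat⟩ | ⟨hw, hmat⟩ | ⟨hw, hmat⟩ | ⟨hw, hcQ⟩
  · exact absurd hμC (hdead a μC)
  · -- w = 1, only y
    subst hw
    obtain ⟨ha, hsupp⟩ := hmat a μC hμC
    rw [Set.mem_singleton_iff] at ha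
    subst ha
    refine ⟨FDist.dirac 4, by simp [sysR2], liftRel_to_dirac _ _ _ ?_⟩
    intro t ht
    exact Or.inl ⟨rfl, hsupp t ht⟩
  · -- w = 2, y and z
    subst hw
    obtain ⟨ha, hsupp⟩ := hmat a μC hμC
    refine ⟨FDist.dirac 4, ?_, liftRel_to_dirac _ _ _ ?_⟩
    · rcases ha with rfl | ha
      · simp [sysR2]
      · rw [Set.mem_singleton_iff] at ha; subst ha; simp [sysR2]
    · intro t ht
      exact Or.inl ⟨rfl, hsupp t ht⟩
  · -- w = 3, only z
    subst hw
    obtain ⟨ha, hsupp⟩ := hmat a μC hμC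
    rw [Set.mem_singleton_iff] at ha
    subst ha
    refine ⟨FDist.dirac 4, by simp [sysR2], liftRel_to_dirac _ _ _ ?_⟩
    intro t ht
    exact Or.inl ⟨rfl, hsupp t ht⟩
  · -- w = 0, the start state
    subst hw
    obtain ⟨μ2, hμ2, hlift⟩ := hQ c 0 hcQ a μC hμC
    rcases R1_trans_char hμ2 with ⟨-, ha, hμe⟩ | ⟨h, -⟩
    swap
    · exact absurd h (by decide)
    subst ha
    subst hμe
    refine ⟨νthird, by simp [sysR2], ?_⟩
    intro T' hT'
    rcases T'.eq_empty_or_nonempty with rfl | ⟨t0, ht0⟩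
    · rw [prob_empty]
      exact prob_nonneg _ _
    by_cases hdead : ∃ t ∈ T', DeadSt C t
    · obtain ⟨t, htT, htd⟩ := hdead
      have hsub : ({1,2,3} : Set (Fin 5)) ⊆ relImage RR T' := by
        intro w hw
        refine ⟨t, htT, ?_⟩
        have hmatv : ∀ A : Set (Fin 3), MatSt C A t :=
          fun A a' μ' hμ' => absurd hμ' (htd a' μ')
        rcases hw with rfl | hw
        · exact Or.inr (Or.inl ⟨rfl, hmatv _⟩)
        rcases hw with rfl | hw
        · exact Or.inr (Or.inr (Or.inl ⟨rfl, hmatv _⟩))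
        rw [Set.mem_singleton_iff] at hw
        subst hw
        exact Or.inr (Or.inr (Or.inr (Or.inl ⟨rfl, hmatv _⟩)))
      calc μC.prob T' ≤ 1 := prob_le_one _ _
        _ = νthird.prob {1,2,3} := νthird_123.symm
        _ ≤ _ := prob_mono _ hsub
    · push_neg at hdead
      -- bound: μC.prob T' ≤ 1/2
      have h2notin : (2:Fin 4) ∉ relImage Q T' := by
        rintro ⟨t, htT, hQt⟩
        have := hdead t htT
        unfold DeadSt at this
        push_neg at this
        obtain ⟨a', μ', hμ'⟩ := this
        exact absurd hμ' (dead_of_Q2 t hQt a' μ')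
      have hhalf : μC.prob T' ≤ 1/2 :=
        le_trans (hlift T' hT') (μhalf_prob_le h2notin)
      -- t0 has a transition on b ∈ {1,2}
      have hnd := hdead t0 ht0
      unfold DeadSt at hnd
      push_neg at hnd
      obtain ⟨b, ν, hbν⟩ := hnd
      have hmat0 : MatSt C {1,2} t0 := claimMat μC hlift t0 (hT' ht0)
      obtain ⟨hb, -⟩ := hmat0 b ν hbν
      have hMatb : MatSt C {b} t0 := by
        intro a' μ' hμ'
        have heq : ((a', μ') : Fin 3 × FDist T) = (b, ν) := hFP t0 hμ' hbν
        have hae : a' = b := congrArg Prod.fst heq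
        exact ⟨Set.mem_singleton_iff.mpr hae, (hmat0 a' μ' hμ').2⟩
      rw [Set.mem_insert_iff, Set.mem_singleton_iff] at hb
      rcases hb with rfl | rfl
      · -- b = 1
        have hsub : ({1,2} : Set (Fin 5)) ⊆ relImage RR T' := by
          intro w hw
          refine ⟨t0, ht0, ?_⟩
          rcases hw with rfl | hw
          · exact Or.inr (Or.inl ⟨rfl, hMatb⟩)
          · rw [Set.mem_singleton_iff] at hw
            subst hw
            exact Or.inr (Or.inr (Or.inl ⟨rfl, hmat0⟩))
        calc μC.prob T' ≤ 1/2 := hhalf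
          _ ≤ 2/3 := by norm_num
          _ = νthird.prob {1,2} := νthird_12.symm
          _ ≤ _ := prob_mono _ hsub
      · -- b = 2
        have hsub : ({2,3} : Set (Fin 5)) ⊆ relImage RR T' := by
          intro w hw
          refine ⟨t0, ht0, ?_⟩
          rcases hw with rfl | hw
          · exact Or.inr (Or.inr (Or.inl ⟨rfl, hmat0⟩))
          · rw [Set.mem_singleton_iff] at hw
            subst hw
            exact Or.inr (Or.inr (Or.inr (Or.inl ⟨rfl, hMatb⟩)))
        calc μC.prob T' ≤ 1/2 := hhalf
          _ ≤ 2/3 := by norm_num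
          _ = νthird.prob {2,3} := νthird_23.symm
          _ ≤ _ := prob_mono _ hsub
end Main

/-- There are finite reactive LPTSes `R1 ⋠ R2` admitting no fully-probabilistic
counterexample: every fully-probabilistic `C` with `C ≼ R1` also has `C ≼ R2`. -/
theorem no_fully_probabilistic_counterexample :
    ∃ (Act T1 T2 : Type) (i1 : Fintype T1) (i2 : Fintype T2)
      (R1 : @LPTS T1 Act i1) (R2 : @LPTS T2 Act i2),
      @Reactive T1 Act i1 R1 ∧ @Reactive T2 Act i2 R2 ∧
      ¬ @Sim T1 T2 Act i1 i2 R1 R2 ∧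
      ∀ (T : Type) (i : Fintype T) (C : @LPTS T Act i),
        @FullyProbabilistic T Act i C →
        @Sim T T1 Act i i1 C R1 → @Sim T T2 Act i i2 C R2 := by
  exact ⟨Fin 3, Fin 4, Fin 5, inferInstance, inferInstance, sysR1, sysR2,
    reactive1, reactive2, notSim, fun T i C hFP hSim => @forward T i C hFP hSim⟩
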